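/- Let k > 1 be rational, and let S ⊆ ℂ² ∖ {0} be a set consisting of points of the form (r^k·u(r,τ), r·e^{i t(r,τ)}), with r ranging over (0, r₀), where the functions u and t are continuous and u is bounded. Then the tangent cone of S ∪ {0} at the origin is contained in {0} × ℂ = {(u,v) ∈ ℂ² : u = 0}. -/

import Mathlib

open Asymptotics

/-- The tangent cone of a set `A ⊆ ℂ²` at the origin: the set of vectors `w` for which
there is a curve `α` with `α(0) = 0`, `α((0,ε)) ⊆ A` and `α(t) = t·w + o(t)`. -/
def TangentConeAt0 (A : Set (ℂ × ℂ)) : Set (ℂ × ℂ) :=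
  {w | ∃ (ε : ℝ) (α : ℝ → ℂ × ℂ), 0 < ε ∧ α 0 = 0 ∧
    (∀ t ∈ Set.Ioo (0 : ℝ) ε, α t ∈ A) ∧
    (fun t : ℝ => α t - t • w) =o[nhdsWithin 0 (Set.Ioi 0)] fun t : ℝ => t}

/-- Proposition 3.9(i): let `k > 1` be rational and let
`S ⊆ ℂ² ∖ {0}` consist of points `(r^k·u(r,τ), r·e^{i t(r,τ)})` with `r ∈ (0, r₀)`, where
`u, t` are continuous and `u` is bounded. Then the tangent cone of `S ∪ {0}` at the origin
is contained in `{u = 0} = {0} × ℂ`. -/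
theorem tangent_cone_in_axis (k : ℚ) (hk : 1 < (k : ℝ)) (r₀ : ℝ) (hr₀ : 0 < r₀)
    (u : ℝ → ℝ → ℂ) (t : ℝ → ℝ → ℝ)
    (hu_cont : Continuous fun p : ℝ × ℝ => u p.1 p.2)
    (ht_cont : Continuous fun p : ℝ × ℝ => t p.1 p.2)
    (hbdd : ∃ Cb : ℝ, ∀ r τ : ℝ, ‖u r τ‖ ≤ Cb)
    (S : Set (ℂ × ℂ)) (hS0 : (0 : ℂ × ℂ) ∉ S)
    (hS : ∀ p ∈ S, ∃ r τ : ℝ, 0 < r ∧ r < r₀ ∧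
      p = (((r ^ (k : ℝ) : ℝ) : ℂ) * u r τ, (r : ℂ) * Complex.exp (Complex.I * t r τ))) :
    TangentConeAt0 (insert 0 S) ⊆ {p : ℂ × ℂ | p.1 = 0} := by
  rintro w ⟨ε, α, hε, hα0, hαS, ho⟩
  obtain ⟨Cb, hCb⟩ := hbdd
  have hCb0 : 0 ≤ Cb := le_trans (norm_nonneg _) (hCb 0 0)
  simp only [Set.mem_setOf_eq]
  rw [← norm_eq_zero]
  have key : ∀ c : ℝ, 0 < c → ‖w.1‖ ≤ c := by
    intro c hc
    set C : ℝ := c / 2 + ‖w.2‖ with hCdef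
    have hC0 : 0 ≤ C := by positivity
    -- eventually bound from littleO
    have h1 : ∀ᶠ x in nhdsWithin 0 (Set.Ioi 0), ‖α x - x • w‖ ≤ c / 2 * ‖x‖ :=
      ho.bound (by positivity)
    -- eventually the rpow term is small
    have h2 : ∀ᶠ x in nhdsWithin 0 (Set.Ioi 0),
        Cb * C ^ (k : ℝ) * x ^ ((k : ℝ) - 1) < c / 2 := by
      have hcont : Filter.Tendsto (fun x : ℝ => Cb * C ^ (k : ℝ) * x ^ ((k : ℝ) - 1))
          (nhdsWithin 0 (Set.Ioi 0)) (nhds 0) := by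
        have : Filter.Tendsto (fun x : ℝ => x ^ ((k : ℝ) - 1))
            (nhdsWithin 0 (Set.Ioi 0)) (nhds 0) := by
          have := (Real.continuousAt_rpow_const 0 ((k : ℝ) - 1)
            (Or.inr (by linarith))).continuousWithinAt (s := Set.Ioi 0)
          have h0 : (0 : ℝ) ^ ((k : ℝ) - 1) = 0 := Real.zero_rpow (by linarith)
          simpa [ContinuousWithinAt, h0] using this
        have := this.const_mul (Cb * C ^ (k : ℝ))
        simpa using this
      exact hcont.eventually_lt_const (by positivity)
    have h3 : Set.Ioo (0 : ℝ) ε ∈ nhdsWithin 0 (Set.Ioi 0) :=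
      Ioo_mem_nhdsGT_of_mem ⟨le_refl 0, hε⟩
    have hmem : Set.Ioi (0 : ℝ) ∈ nhdsWithin 0 (Set.Ioi 0) := self_mem_nhdsWithin
    obtain ⟨x, ⟨⟨hb1, hb2⟩, hxε⟩, hx0⟩ := (((h1.and h2).and
      (Filter.eventually_of_mem h3 (fun _ h => h))).and
      (Filter.eventually_of_mem hmem (fun _ h => h))).exists
    have hx : (0:ℝ) < x := hx0
    have hnx : ‖x‖ = x := abs_of_pos hx
    have hfst : ‖(α x).1 - x • w.1‖ ≤ c / 2 * x := by
      have h := norm_fst_le (α x - x • w)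
      simp only [Prod.fst_sub, Prod.smul_fst] at h
      calc ‖(α x).1 - x • w.1‖ ≤ ‖α x - x • w‖ := h
        _ ≤ c / 2 * ‖x‖ := hb1
        _ = c / 2 * x := by rw [hnx]
    have hsnd : ‖(α x).2‖ ≤ C * x := by
      have h := norm_snd_le (α x - x • w)
      simp only [Prod.snd_sub, Prod.smul_snd] at h
      have h2 : ‖(α x).2 - x • w.2‖ ≤ c / 2 * x := by
        calc ‖(α x).2 - x • w.2‖ ≤ ‖α x - x • w‖ := h
          _ ≤ c / 2 * ‖x‖ := hb1
          _ = c / 2 * x := by rw [hnx]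
      have h3 : ‖(α x).2‖ ≤ ‖(α x).2 - x • w.2‖ + ‖x • w.2‖ := by
        simpa using norm_add_le ((α x).2 - x • w.2) (x • w.2)
      have h4 : ‖x • w.2‖ = x * ‖w.2‖ := by
        rw [norm_smul, Real.norm_eq_abs, abs_of_pos hx]
      rw [h4] at h3
      calc ‖(α x).2‖ ≤ c / 2 * x + x * ‖w.2‖ := by linarith
        _ = C * x := by rw [hCdef]; ring
    have hfirst : ‖(α x).1‖ ≤ c / 2 * x := by
      rcases hαS x hxε with h0 | hmemS
      · rw [h0]
        simp only [Prod.fst_zero, norm_zero]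
        positivity
      · obtain ⟨r, τ, hr0, hrr₀, hp⟩ := hS _ hmemS
        have hre : (Complex.I * (t r τ : ℂ)).re = 0 := by simp
        have habs : ‖(Complex.exp (Complex.I * (t r τ : ℂ)))‖ = 1 := by
          rw [Complex.norm_exp, hre, Real.exp_zero]
        have hr2 : ‖(α x).2‖ = r := by
          rw [hp]
          simp only [norm_mul, habs, Complex.norm_real, Real.norm_eq_abs,
            abs_of_pos hr0, mul_one]
        have hrCx : r ≤ C * x := hr2 ▸ hsnd
        have h1 : ‖(α x).1‖ = r ^ (k : ℝ) * ‖u r τ‖ := by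
          rw [hp]
          simp only [norm_mul, Complex.norm_real, Real.norm_eq_abs,
            abs_of_nonneg (Real.rpow_nonneg hr0.le _)]
        have hrk : r ^ (k : ℝ) ≤ (C * x) ^ (k : ℝ) :=
          Real.rpow_le_rpow hr0.le hrCx (by linarith)
        have hCx : (C * x) ^ (k : ℝ) = C ^ (k : ℝ) * (x ^ ((k : ℝ) - 1) * x) := by
          rw [Real.mul_rpow hC0 hx.le]
          congr 1
          rw [← Real.rpow_add_one hx.ne' ((k : ℝ) - 1)]
          norm_num
        calc ‖(α x).1‖ = r ^ (k : ℝ) * ‖u r τ‖ := h1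
          _ ≤ (C * x) ^ (k : ℝ) * Cb := by
              apply mul_le_mul hrk (hCb r τ) (norm_nonneg _)
              positivity
          _ = Cb * C ^ (k : ℝ) * x ^ ((k : ℝ) - 1) * x := by rw [hCx]; ring
          _ ≤ c / 2 * x := by nlinarith
    have hw1 : x * ‖w.1‖ ≤ c * x := by
      have h5 : ‖x • w.1‖ ≤ ‖(α x).1 - x • w.1‖ + ‖(α x).1‖ := by
        have := norm_sub_le ((α x).1 - x • w.1) ((α x).1)
        simpa [norm_sub_rev] using this
      have h6 : ‖x • w.1‖ = x * ‖w.1‖ := by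
        rw [norm_smul, Real.norm_eq_abs, abs_of_pos hx]
      rw [h6] at h5
      linarith
    have := le_of_mul_le_mul_left (by linarith [hw1] : x * ‖w.1‖ ≤ x * c) hx
    linarith
  have h0 : ‖w.1‖ ≤ 0 := le_of_forall_pos_le_add (by intro ε' hε'; simpa using key ε' hε')
  linarith [norm_nonneg w.1]
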